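/- Let p₀, p₁, p∞ be integers with 2 ≤ p₀ ≤ p₁ ≤ p∞. Then 1/p₀ + 1/p₁ + 1/p∞ < 1 and (1 − 1/p₀ − 1/p₁)·p∞ ≤ 2 hold (as rational inequalities) if and only if (p₀, p₁, p∞) is one of the following 18 triples: (2,3,7), (2,3,8), (2,3,9), (2,3,10), (2,3,11), (2,3,12), (2,4,5), (2,4,6), (2,4,7), (2,4,8), (2,5,5), (2,5,6), (2,6,6), (3,3,4), (3,3,5), (3,3,6), (3,4,4), (4,4,4). -/

import Mathlib

/-- Enumeration after Proposition 2: the ordered triples `2 ≤ p₀ ≤ p₁ ≤ p∞` satisfying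
hyperbolicity `1/p₀ + 1/p₁ + 1/p∞ < 1` and `(1 - 1/p₀ - 1/p₁) * p∞ ≤ 2` are exactly the
18 listed triples. -/
theorem stmt2 (p₀ p₁ p_inf : ℤ) (h0 : 2 ≤ p₀) (h01 : p₀ ≤ p₁) (h1inf : p₁ ≤ p_inf) :
    (1/(p₀:ℚ) + 1/(p₁:ℚ) + 1/(p_inf:ℚ) < 1 ∧
      (1 - 1/(p₀:ℚ) - 1/(p₁:ℚ)) * (p_inf:ℚ) ≤ 2) ↔
    ((p₀, p₁, p_inf) = (2, 3, 7) ∨ (p₀, p₁, p_inf) = (2, 3, 8) ∨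
     (p₀, p₁, p_inf) = (2, 3, 9) ∨ (p₀, p₁, p_inf) = (2, 3, 10) ∨
     (p₀, p₁, p_inf) = (2, 3, 11) ∨ (p₀, p₁, p_inf) = (2, 3, 12) ∨
     (p₀, p₁, p_inf) = (2, 4, 5) ∨ (p₀, p₁, p_inf) = (2, 4, 6) ∨
     (p₀, p₁, p_inf) = (2, 4, 7) ∨ (p₀, p₁, p_inf) = (2, 4, 8) ∨
     (p₀, p₁, p_inf) = (2, 5, 5) ∨ (p₀, p₁, p_inf) = (2, 5, 6) ∨
     (p₀, p₁, p_inf) = (2, 6, 6) ∨ (p₀, p₁, p_inf) = (3, 3, 4) ∨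
     (p₀, p₁, p_inf) = (3, 3, 5) ∨ (p₀, p₁, p_inf) = (3, 3, 6) ∨
     (p₀, p₁, p_inf) = (3, 4, 4) ∨ (p₀, p₁, p_inf) = (4, 4, 4)) := by
  constructor
  · rintro ⟨hhyp, hle⟩
    have ha : (2:ℚ) ≤ (p₀:ℚ) := by exact_mod_cast h0
    have hab : (p₀:ℚ) ≤ (p₁:ℚ) := by exact_mod_cast h01
    have hbc : (p₁:ℚ) ≤ (p_inf:ℚ) := by exact_mod_cast h1inf
    have hb2 : (2:ℚ) ≤ (p₁:ℚ) := le_trans ha hab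
    have hc2 : (2:ℚ) ≤ (p_inf:ℚ) := le_trans hb2 hbc
    have hcpos : (0:ℚ) < (p_inf:ℚ) := by linarith
    have hicpos : (0:ℚ) < 1/(p_inf:ℚ) := by positivity
    have hp1 : 3 ≤ p₁ := by
      by_contra h
      have h2 : p₁ = 2 := by omega
      have h3 : p₀ = 2 := by omega
      subst h2; subst h3
      norm_num at hhyp
      linarith
    have hb3 : (3:ℚ) ≤ (p₁:ℚ) := by exact_mod_cast hp1
    have hib : 1/(p₁:ℚ) ≤ 1/3 := by
      rw [div_le_div_iff₀ (by linarith) (by norm_num)]; linarith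
    have h16 : (1:ℚ)/6 ≤ 1 - 1/(p₀:ℚ) - 1/(p₁:ℚ) := by
      rcases le_or_gt 3 p₀ with h3 | h3
      · have ha3 : (3:ℚ) ≤ (p₀:ℚ) := by exact_mod_cast h3
        have hia : 1/(p₀:ℚ) ≤ 1/3 := by
          rw [div_le_div_iff₀ (by linarith) (by norm_num)]; linarith
        linarith
      · have h2 : p₀ = 2 := by omega
        subst h2
        push_cast
        linarith
    have hcle : p_inf ≤ 12 := by
      by_contra h
      have h13 : (13:ℚ) ≤ (p_inf:ℚ) := by exact_mod_cast (by omega : (13:ℤ) ≤ p_inf)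
      have := mul_le_mul_of_nonneg_right h16 (le_of_lt hcpos)
      linarith
    have hp0le : p₀ ≤ 12 := by omega
    have hp1le : p₁ ≤ 12 := by omega
    interval_cases p₀ <;> interval_cases p₁ <;> interval_cases p_inf <;>
      first
        | decide
        | (exfalso; revert hhyp hle; norm_num)
  · rintro (h|h|h|h|h|h|h|h|h|h|h|h|h|h|h|h|h|h) <;>
      (simp only [Prod.mk.injEq] at h; obtain ⟨rfl, rfl, rfl⟩ := h; norm_num)
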